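/- Let B ≥ 2 be an integer base, k ≥ 1, and let (a, b, c) be a digit-block triple with property P*_k. Then: (1) 2a < B^k (so the leading base-B digit of a is less than B/2); (2) c = b·(B^k − B)/(B − 1) + c_k where c_k = c mod B, and b > c_k > 1 (i.e., all digits of c except the last equal b, and the last digit c_k satisfies 1 < c_k < b); (3) gcd(c_k, B) > 1; (4) if a_k ≠ b, where a_k = a mod B is the last digit of a, then gcd(|a_k − b|, B) > 1. -/

import Mathlib

set_option maxHeartbeats 1000000


/-- Structure theorem for nontrivial solutions of `P*_k`. -/
theorem stmt_1 (B k a b c : ℕ) (hB : 2 ≤ B) (hk : 1 ≤ k)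
    (ha₁ : B ^ (k - 1) ≤ a) (ha₂ : a < B ^ k) (hb : b < B) (hc : c < B ^ k)
    (hP : (a * B + b) * c = a * (b * B ^ k + c))
    (hz : ¬(a = 0 ∧ b = 0) ∧ ¬(a = 0 ∧ c = 0) ∧ ¬(b = 0 ∧ c = 0))
    (hne : ¬(a = b * ((B ^ k - 1) / (B - 1)) ∧ c = b * ((B ^ k - 1) / (B - 1)))) :
    2 * a < B ^ k ∧
    (c = b * ((B ^ k - B) / (B - 1)) + c % B ∧ c % B < b ∧ 1 < c % B) ∧
    1 < Nat.gcd (c % B) B ∧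
    (a % B ≠ b → 1 < Int.gcd ((a % B : ℤ) - (b : ℤ)) (B : ℤ)) := by
  obtain ⟨k', rfl⟩ : ∃ k', k = k' + 1 := ⟨k - 1, by omega⟩
  simp only [Nat.add_sub_cancel] at ha₁
  have hB1 : 1 ≤ B := by omega
  -- the geometric sum T = 1 + B + ... + B^(k'-1)
  have hdvdT : (B - 1) ∣ (B ^ k' - 1) := by
    simpa using Nat.sub_dvd_pow_sub_pow B 1 k'
  have hBk'1 : 1 ≤ B ^ k' := Nat.one_le_pow _ _ (by omega)
  obtain ⟨T, hT1⟩ : ∃ T, (B - 1) * T = B ^ k' - 1 := ⟨_, Nat.mul_div_cancel' hdvdT⟩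
  have hTz : ((B : ℤ) - 1) * (T : ℤ) = (B : ℤ) ^ k' - 1 := by
    zify [hB1, hBk'1] at hT1; linarith [hT1]
  -- the two ℕ-divisions appearing in the statement
  have hdivS : (B ^ (k' + 1) - B) / (B - 1) = B * T := by
    apply Nat.div_eq_of_eq_mul_left (by omega)
    zify [show B ≤ B ^ (k' + 1) from Nat.le_self_pow (by omega) B, hB1]
    linear_combination (-(B : ℤ)) * hTz
  have hdiv2 : (B ^ (k' + 1) - 1) / (B - 1) = B * T + 1 := by
    apply Nat.div_eq_of_eq_mul_left (by omega)
    zify [show 1 ≤ B ^ (k' + 1) from Nat.one_le_pow _ _ (by omega), hB1]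
    linear_combination (-(B : ℤ)) * hTz
  -- nondegeneracy
  have ha1 : 1 ≤ a := le_trans hBk'1 ha₁
  have hb1 : 1 ≤ b := by
    rcases Nat.eq_zero_or_pos b with hb0 | h
    · exfalso
      subst hb0
      simp only [Nat.zero_mul, Nat.zero_add, Nat.add_zero] at hP
      have hc0 : c = 0 := by
        by_contra hc0
        have hac : 1 ≤ a * c := Nat.mul_pos ha1 (Nat.pos_of_ne_zero hc0)
        have h2 : a * 2 * c ≤ a * B * c :=
          Nat.mul_le_mul_right _ (Nat.mul_le_mul_left _ hB)
        nlinarith [hP, hac, h2]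
      exact hz.2.2 ⟨rfl, hc0⟩
    · exact h
  have hc1 : 1 ≤ c := by
    rcases Nat.eq_zero_or_pos c with hc0 | h
    · exfalso
      subst hc0
      simp only [Nat.mul_zero, Nat.add_zero] at hP
      have hb0 : b = 0 := by
        by_contra hb0
        have : 0 < a * (b * B ^ (k' + 1)) :=
          Nat.mul_pos ha1 (Nat.mul_pos (Nat.pos_of_ne_zero hb0)
            (Nat.pow_pos (by omega)))
        omega
      exact hz.2.2 ⟨hb0, rfl⟩
    · exact h
  -- integer key identity: c * (a*(B-1) + b) = a*b*B^(k+1)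
  have hPz : ((a : ℤ) * B + b) * c = a * (b * B ^ (k' + 1) + c) := by exact_mod_cast hP
  have key : (c : ℤ) * ((a : ℤ) * ((B : ℤ) - 1) + b) = (a : ℤ) * b * (B : ℤ) ^ (k' + 1) := by
    linear_combination hPz
  obtain ⟨rz, hrzdef⟩ : ∃ r : ℤ, r = (c : ℤ) - (b : ℤ) * ((B : ℤ) * T) := ⟨_, rfl⟩
  have id1 : rz * ((a : ℤ) * ((B : ℤ) - 1) + b)
      = (b : ℤ) * ((a : ℤ) * B - (b : ℤ) * ((B : ℤ) * T)) := by
    linear_combination key - (a : ℤ) * b * B * hTz +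
      ((a : ℤ) * ((B : ℤ) - 1) + b) * hrzdef
  have id2 : (a : ℤ) * ((b : ℤ) * B - rz * ((B : ℤ) - 1)) = (b : ℤ) * c := by
    linear_combination -key + (a : ℤ) * b * B * hTz -
      (a : ℤ) * ((B : ℤ) - 1) * hrzdef
  have hDpos : 0 < (a : ℤ) * ((B : ℤ) - 1) + b := by
    have h1 : (1 : ℤ) ≤ a := by exact_mod_cast ha1
    have h2 : (2 : ℤ) ≤ B := by exact_mod_cast hB
    have h3 := mul_pos (show (0:ℤ) < a by linarith) (show (0:ℤ) < (B:ℤ) - 1 by linarith)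
    have h4 : (0 : ℤ) ≤ b := Int.natCast_nonneg b
    linarith
  have haz : ((B : ℤ)) ^ k' ≤ (a : ℤ) := by exact_mod_cast ha₁
  have hbz : (b : ℤ) ≤ (B : ℤ) - 1 := by
    have : (b : ℤ) < B := by exact_mod_cast hb
    linarith
  have hbz1 : (1 : ℤ) ≤ b := by exact_mod_cast hb1
  have hBz : (2 : ℤ) ≤ B := by exact_mod_cast hB
  have hTnn : (0 : ℤ) ≤ T := Int.natCast_nonneg T
  -- a*B - b*B*T ≥ B ≥ 1
  have hBTnn : (0 : ℤ) ≤ (B : ℤ) * T := by positivity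
  have hgap : (B : ℤ) ≤ (a : ℤ) * B - (b : ℤ) * ((B : ℤ) * T) := by
    have h1 : (b : ℤ) * ((B : ℤ) * T) ≤ ((B : ℤ) - 1) * ((B : ℤ) * T) :=
      mul_le_mul_of_nonneg_right hbz hBTnn
    have h2 : ((B : ℤ) - 1) * ((B : ℤ) * T) = (B : ℤ) * ((B : ℤ) ^ k' - 1) := by
      linear_combination (B : ℤ) * hTz
    have h3 := mul_le_mul_of_nonneg_right haz (show (0:ℤ) ≤ B by linarith)
    linarith
  -- 1 ≤ rz
  have hrz1 : 1 ≤ rz := by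
    by_contra h
    push_neg at h
    have h0 : rz ≤ 0 := by omega
    have h1 : (0 : ℤ) ≤ (-rz) * ((a : ℤ) * ((B : ℤ) - 1) + b) :=
      mul_nonneg (by linarith) hDpos.le
    have h2 : 1 * (B : ℤ) ≤ (b : ℤ) * ((a : ℤ) * B - (b : ℤ) * ((B : ℤ) * T)) :=
      mul_le_mul hbz1 hgap (by linarith) (by linarith)
    linarith [id1]
  -- rz ≤ b
  have hrzb : rz ≤ (b : ℤ) := by
    by_contra h
    push_neg at h
    have h1 : (b : ℤ) + 1 ≤ rz := by omega
    have h2 : ((b : ℤ) + 1) * ((a : ℤ) * ((B : ℤ) - 1) + b)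
        ≤ rz * ((a : ℤ) * ((B : ℤ) - 1) + b) :=
      mul_le_mul_of_nonneg_right h1 hDpos.le
    have h3 : (0 : ℤ) ≤ (a : ℤ) * ((B : ℤ) - 1 - b) :=
      mul_nonneg (Int.natCast_nonneg a) (by linarith)
    have h4 : (0 : ℤ) ≤ (b : ℤ) * ((b : ℤ) * ((B : ℤ) * T)) :=
      mul_nonneg (Int.natCast_nonneg b) (mul_nonneg (Int.natCast_nonneg b) hBTnn)
    nlinarith [id1]
  -- rz = b is the excluded trivial solution
  have hrzb' : rz ≤ (b : ℤ) - 1 := by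
    rcases lt_or_eq_of_le hrzb with h | h
    · omega
    · exfalso
      have hD : (a : ℤ) * ((B : ℤ) - 1) + b = (a : ℤ) * B - (b : ℤ) * ((B : ℤ) * T) := by
        have h2 := id1
        rw [h] at h2
        exact mul_left_cancel₀ (by omega : (b : ℤ) ≠ 0) h2
      have haz0 : (a : ℤ) = (b : ℤ) * ((B : ℤ) * T + 1) := by linarith
      have haa : a = b * (B * T + 1) := by exact_mod_cast haz0
      have hDval : (a : ℤ) * ((B : ℤ) - 1) + b = (b : ℤ) * (B : ℤ) ^ (k' + 1) := by
        rw [haz0]; linear_combination (b : ℤ) * B * hTz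
      have hcz : (c : ℤ) = (a : ℤ) := by
        have h2 := key
        rw [hDval] at h2
        have hBkpos : (0 : ℤ) < (b : ℤ) * (B : ℤ) ^ (k' + 1) := by positivity
        exact mul_right_cancel₀ (ne_of_gt hBkpos)
          (by linear_combination h2 :
            (c : ℤ) * ((b : ℤ) * (B : ℤ) ^ (k' + 1)) = (a : ℤ) * ((b : ℤ) * (B : ℤ) ^ (k' + 1)))
      have hcc : c = a := by exact_mod_cast hcz
      exact hne ⟨by rw [hdiv2]; exact haa, by rw [hdiv2, hcc]; exact haa⟩
  -- ℕ digit decomposition of c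
  have hlow : b * (B * T) + 1 ≤ c := by
    have h2 : (b : ℤ) * ((B : ℤ) * T) + 1 ≤ (c : ℤ) := by
      rw [hrzdef] at hrz1; linarith
    exact_mod_cast h2
  have hup : c + 1 ≤ b * (B * T) + b := by
    have h2 : (c : ℤ) + 1 ≤ (b : ℤ) * ((B : ℤ) * T) + b := by
      rw [hrzdef] at hrzb'; linarith
    exact_mod_cast h2
  obtain ⟨R, hcR⟩ : ∃ R, c = b * (B * T) + R := ⟨c - b * (B * T), by omega⟩
  have hRb : R < b := by omega
  have hR1 : 1 ≤ R := by omega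
  have hmod : c % B = R := by
    rw [hcR, show b * (B * T) + R = R + (b * T) * B from by ring,
      Nat.add_mul_mod_self_right, Nat.mod_eq_of_lt (by omega)]
  have hrzR : rz = (R : ℤ) := by
    have h2 : (c : ℤ) = (b : ℤ) * ((B : ℤ) * T) + R := by exact_mod_cast hcR
    rw [hrzdef]
    linarith
  -- Part 1 : 2a < B^k
  have hu2b : 2 * (b : ℤ) ≤ (b : ℤ) * B - rz * ((B : ℤ) - 1) := by
    have h1 := mul_le_mul_of_nonneg_right hrzb' (show (0:ℤ) ≤ (B:ℤ) - 1 by linarith)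
    have h2 : ((b : ℤ) - 1) * ((B : ℤ) - 1) = (b : ℤ) * B - b - B + 1 := by ring
    linarith
  have h2ac : 2 * (a : ℤ) ≤ (c : ℤ) := by
    by_contra h
    push_neg at h
    have h1 := mul_le_mul_of_nonneg_left hu2b (Int.natCast_nonneg a)
    have h2 : (b : ℤ) * c < (b : ℤ) * (2 * a) :=
      mul_lt_mul_of_pos_left h (by linarith)
    linarith [id2, h1]
  have part1 : 2 * a < B ^ (k' + 1) := by
    have h2ac' : 2 * a ≤ c := by exact_mod_cast h2ac
    omega
  -- ℕ version of key identity
  have keyN : c * (a * (B - 1) + b) = a * b * B ^ (k' + 1) := by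
    zify [hB1]
    linear_combination key
  -- Part 3 : gcd(c % B, B) > 1
  have part3 : 1 < Nat.gcd (c % B) B := by
    by_contra hg
    push_neg at hg
    have h0 : Nat.gcd (c % B) B ≠ 0 := by
      intro h
      have := (Nat.gcd_eq_zero_iff.mp h).2
      omega
    have hcop1 : Nat.gcd (c % B) B = 1 := by omega
    have hcopBc : Nat.Coprime B c := by
      unfold Nat.Coprime
      rw [Nat.gcd_rec]
      exact hcop1
    have hcopPow : Nat.Coprime (B ^ (k' + 1)) c := Nat.Coprime.pow_left _ hcopBc
    have hdvdD : B ^ (k' + 1) ∣ a * (B - 1) + b := by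
      apply hcopPow.dvd_of_dvd_mul_right
      exact ⟨a * b, by linear_combination keyN⟩
    -- the trivial solution value a₀
    obtain ⟨a₀, ha₀def⟩ : ∃ a₀, a₀ = b * (B * T + 1) := ⟨_, rfl⟩
    have hD0 : (a₀ : ℤ) * ((B : ℤ) - 1) + b = (b : ℤ) * (B : ℤ) ^ (k' + 1) := by
      rw [ha₀def]; push_cast; linear_combination (b : ℤ) * B * hTz
    have ha₀lt : (a₀ : ℤ) < (B : ℤ) ^ (k' + 1) := by
      by_contra h
      push_neg at h
      have hpk : (1 : ℤ) ≤ (B : ℤ) ^ (k' + 1) := by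
        exact_mod_cast Nat.one_le_pow (k' + 1) B (by omega)
      have e1 : (B : ℤ) ^ (k' + 1) * ((B : ℤ) - 1) ≤ (a₀ : ℤ) * ((B : ℤ) - 1) :=
        mul_le_mul_of_nonneg_right h (by linarith)
      have e2 : (b : ℤ) * ((B : ℤ) ^ (k' + 1) - 1)
          ≤ ((B : ℤ) - 1) * ((B : ℤ) ^ (k' + 1) - 1) :=
        mul_le_mul_of_nonneg_right hbz (by linarith)
      linarith [hD0]
    have hdvdDz : ((B : ℤ) ^ (k' + 1)) ∣ ((a : ℤ) * ((B : ℤ) - 1) + b) := by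
      obtain ⟨e, he⟩ := hdvdD
      refine ⟨(e : ℤ), ?_⟩
      have h2 : ((a * (B - 1) + b : ℕ) : ℤ) = ((B ^ (k' + 1) * e : ℕ) : ℤ) := by
        rw [he]
      push_cast [hB1] at h2
      linarith
    have hdvddiff : ((B : ℤ) ^ (k' + 1)) ∣ ((a : ℤ) - a₀) * ((B : ℤ) - 1) := by
      have h2 : ((B : ℤ) ^ (k' + 1)) ∣ ((a₀ : ℤ) * ((B : ℤ) - 1) + b) := by
        rw [hD0]; exact dvd_mul_left _ _
      have h3 := dvd_sub hdvdDz h2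
      have heq : ((a : ℤ) * ((B : ℤ) - 1) + b) - ((a₀ : ℤ) * ((B : ℤ) - 1) + b)
          = ((a : ℤ) - a₀) * ((B : ℤ) - 1) := by ring
      rwa [heq] at h3
    have hcopr : IsCoprime ((B : ℤ) ^ (k' + 1)) ((B : ℤ) - 1) :=
      IsCoprime.pow_left ⟨1, -1, by ring⟩
    have hdvda : ((B : ℤ) ^ (k' + 1)) ∣ ((a : ℤ) - a₀) :=
      hcopr.dvd_of_dvd_mul_right hdvddiff
    have haa0 : (a : ℤ) = (a₀ : ℤ) := by
      by_contra hne'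
      have hne0 : (a : ℤ) - a₀ ≠ 0 := fun h2 => hne' (by linarith)
      have h4 := Int.le_of_dvd (abs_pos.mpr hne0) ((dvd_abs _ _).mpr hdvda)
      have haz2 : (a : ℤ) < (B : ℤ) ^ (k' + 1) := by exact_mod_cast ha₂
      have h0a : (0 : ℤ) ≤ a := Int.natCast_nonneg a
      have h0a0 : (0 : ℤ) ≤ a₀ := Int.natCast_nonneg a₀
      rcases abs_cases ((a : ℤ) - a₀) with ⟨h5, _⟩ | ⟨h5, _⟩ <;> omega
    have haa : a = a₀ := by exact_mod_cast haa0
    have hcz : (c : ℤ) = (a₀ : ℤ) := by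
      have h2 := key
      rw [haa0, hD0] at h2
      have hBkpos : (0 : ℤ) < (b : ℤ) * (B : ℤ) ^ (k' + 1) := by positivity
      exact mul_right_cancel₀ (ne_of_gt hBkpos)
        (by linear_combination h2 :
          (c : ℤ) * ((b : ℤ) * (B : ℤ) ^ (k' + 1)) = (a₀ : ℤ) * ((b : ℤ) * (B : ℤ) ^ (k' + 1)))
    have hcc : c = a₀ := by exact_mod_cast hcz
    exact hne ⟨by rw [hdiv2, ← ha₀def]; exact haa, by rw [hdiv2, ← ha₀def]; exact hcc⟩
  -- 1 < c % B
  have hR2 : 1 < c % B := by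
    rw [hmod]
    rcases Nat.lt_or_ge 1 R with h | h
    · exact h
    · exfalso
      have hR1' : R = 1 := by omega
      rw [hmod, hR1', Nat.gcd_one_left] at part3
      omega
  -- Part 4
  have part4 : a % B ≠ b → 1 < Int.gcd ((a % B : ℤ) - (b : ℤ)) (B : ℤ) := by
    intro _
    by_contra hg
    push_neg at hg
    have h0 : Int.gcd ((a % B : ℤ) - (b : ℤ)) (B : ℤ) ≠ 0 := by
      intro h
      have h2 := (Int.gcd_eq_zero_iff.mp h).2
      simp at h2
      omega
    have hcop : IsCoprime ((a % B : ℤ) - (b : ℤ)) (B : ℤ) :=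
      Int.isCoprime_iff_gcd_eq_one.mpr (by omega)
    have hdvd1 : (B : ℤ) ∣ rz * ((a : ℤ) - b) :=
      ⟨rz * a - (a : ℤ) * b + (b : ℤ) * b * T, by linear_combination -id1⟩
    have hmodA : (a : ℤ) = (B : ℤ) * ((a / B : ℕ) : ℤ) + ((a % B : ℕ) : ℤ) := by
      exact_mod_cast (Nat.div_add_mod a B).symm
    have hdvd2 : (B : ℤ) ∣ rz * (((a % B : ℕ) : ℤ) - b) := by
      have h2 : (B : ℤ) ∣ rz * ((B : ℤ) * ((a / B : ℕ) : ℤ)) := ⟨rz * ((a / B : ℕ) : ℤ), by ring⟩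
      have h3 := dvd_sub hdvd1 h2
      have heq : rz * ((a : ℤ) - b) - rz * ((B : ℤ) * ((a / B : ℕ) : ℤ))
          = rz * (((a % B : ℕ) : ℤ) - b) := by rw [hmodA]; ring
      rwa [heq] at h3
    have hdvdr : (B : ℤ) ∣ rz := hcop.symm.dvd_of_dvd_mul_right hdvd2
    have h5 := Int.le_of_dvd (by omega) hdvdr
    omega
  exact ⟨part1, ⟨by rw [hdivS]; omega, by omega, hR2⟩, part3, part4⟩
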